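/- Let p > 3 be a prime, m a positive integer, and n = 2m. If p^m ≡ 1 (mod 3), then for every nonzero c ∈ F_{p^n}, the element D = c̄^2 - c̄·c + c^2 is nonzero, where c̄ = c^{p^m}. -/
import Mathlib


/-- Let `p > 3` be prime, `n = 2m`, `p^m ≡ 1 (mod 3)`. For every nonzero `c` in `F_{p^n}`,
`D = c̄² - c̄·c + c² ≠ 0`, where `c̄ = c^(p^m)`. -/
theorem stmt10 (p : ℕ) (hp : p.Prime) (hp3 : 3 < p) (m : ℕ) (hm : 0 < m) (n : ℕ)
    (hn : n = 2 * m) (hmod : p ^ m % 3 = 1)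
    (F : Type*) [Field F] [Fintype F]
    (hF : Fintype.card F = p ^ n) :
    ∀ c : F, c ≠ 0 → (c ^ p ^ m) ^ 2 - c ^ p ^ m * c + c ^ 2 ≠ 0 := by
  intro c hc hD
  -- characteristic of F is p
  have hchar : CharP F p := by
    obtain ⟨r, hr⟩ := CharP.exists F
    haveI := hr
    obtain ⟨k, hrp, hcard⟩ := FiniteField.card F r
    have hpr : p = r := by
      have hdvd : p ∣ r ^ (k : ℕ) := by
        rw [← hcard, hF, hn]
        exact dvd_pow_self p (by positivity)
      exact (Nat.prime_dvd_prime_iff_eq hp hrp).mp (Nat.Prime.dvd_of_dvd_pow hp hdvd)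
    rwa [hpr]
  have h3 : (3 : F) ≠ 0 := by
    intro h
    have : (p : ℕ) ∣ 3 := by
      have := (CharP.cast_eq_zero_iff F p 3).mp (by exact_mod_cast h)
      exact this
    have := Nat.le_of_dvd (by norm_num) this
    omega
  -- q ≡ 1 mod 6
  set q := p ^ m with hq
  have hodd : q % 2 = 1 := by
    have hpodd : p % 2 = 1 := Nat.odd_iff.mp (hp.odd_of_ne_two (by omega))
    have : Odd q := (Nat.odd_iff.mpr hpodd).pow
    exact Nat.odd_iff.mp this
  obtain ⟨k, hk⟩ : ∃ k, q = 6 * k + 1 := ⟨q / 6, by omega⟩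
  set cb := c ^ q with hcb
  -- c^(q*q) = c
  have hpow : c ^ (q * q) = c := by
    have hqq : q * q = p ^ n := by rw [hq, ← pow_add, hn, two_mul]
    rw [hqq, ← hF, FiniteField.pow_card]
  have hcbq : cb ^ q = c := by rw [hcb, ← pow_mul, hpow]
  -- cb^3 = -c^3
  have h3cb : cb ^ 3 = -c ^ 3 := by linear_combination (cb + c) * hD
  set y := c ^ (6 * k) with hy
  have hsub : cb = y * c := by
    rw [hcb, hk, pow_succ, hy]
  have e1 : cb ^ q = (cb ^ 3) ^ (2 * k) * cb := by
    have hq' : q = 3 * (2 * k) + 1 := by omega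
    rw [hq', pow_succ, pow_mul]
  have e3 : (cb ^ 3) ^ (2 * k) = y := by
    rw [h3cb, hy, show (-c ^ 3 : F) = (-1) * c ^ 3 by ring, mul_pow,
      show ((-1 : F)) ^ (2 * k) = 1 by rw [pow_mul]; norm_num, one_mul, ← pow_mul]
    congr 1
    omega
  have hdag : y * cb = c := by rw [← hcbq, e1, e3]
  have hy2 : y ^ 2 = 1 := by
    have h0 : (y ^ 2 - 1) * c = 0 := by linear_combination hdag - y * hsub
    rcases mul_eq_zero.mp h0 with h | h
    · linear_combination h
    · exact absurd h hc
  have hyq : y ^ 2 - y + 1 = 0 := by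
    rw [hsub] at hD
    have : c ^ 2 * (y ^ 2 - y + 1) = 0 := by linear_combination hD
    rcases mul_eq_zero.mp this with h | h
    · exact absurd (pow_eq_zero_iff (by norm_num)|>.mp h) hc
    · exact h
  exact h3 (by linear_combination (y + 2) * hyq + (-y - 1) * hy2)
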